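/- Equal expectations for the approximate Milstein coarse scheme with arbitrary refinement factor M: assume a, b, h are globally Lipschitz continuous. Then E[S*_n] = E[S^c_n] for every n = 0, 1, ..., N. -/

import Mathlib

open MeasureTheory ProbabilityTheory

/-- Truncated Milstein one-step map
`D^f_i(x, s, w) = a_i(x) s + Σ_j b_{ij}(x) w_j + Σ_{j,k} h_{ijk}(x)(w_j w_k − Ω_{jk} s)`. -/
noncomputable def Df {d D : ℕ}
    (a : (Fin d → ℝ) → Fin d → ℝ)
    (b : (Fin d → ℝ) → Fin d → Fin D → ℝ)
    (h3 : (Fin d → ℝ) → Fin d → Fin D → Fin D → ℝ)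
    (Om : Fin D → Fin D → ℝ)
    (x : Fin d → ℝ) (s : ℝ) (w : Fin D → ℝ) : Fin d → ℝ :=
  fun i => a x i * s + (∑ j, b x i j * w j)
    + ∑ j, ∑ k, h3 x i j k * (w j * w k - Om j k * s)

/-- Quadrature Lévy area `𝒜_{jk} = Σ_{m=1}^{M−1} δ_{k,m} (Σ_{q=0}^{m−1} δ_{j,q})`
built from the sub-increments `δ 0, ..., δ (M-1)`. -/
noncomputable def quadLevy {D : ℕ} (M : ℕ) (δ : ℕ → Fin D → ℝ) (j k : Fin D) : ℝ :=
  ∑ m ∈ Finset.Icc 1 (M - 1), δ m k * ∑ q ∈ Finset.range m, δ q j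

/-- General-`M` coarse one-step map:
`D^{c,M}_i(x₁, x₂, Δt, δ) = a_i(x₁) Δt + Σ_j b_{ij}(x₂) ΔW_j
  + Σ_{j,k} h_{ijk}(x₂)(ΔW_j ΔW_k − Ω_{jk} Δt − 𝒜_{jk} + 𝒜_{kj})`, where
`ΔW_j = Σ_{m<M} δ_{j,m}`. -/
noncomputable def DcM {d D : ℕ}
    (a : (Fin d → ℝ) → Fin d → ℝ)
    (b : (Fin d → ℝ) → Fin d → Fin D → ℝ)
    (h3 : (Fin d → ℝ) → Fin d → Fin D → Fin D → ℝ)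
    (Om : Fin D → Fin D → ℝ)
    (M : ℕ) (x1 x2 : Fin d → ℝ) (s : ℝ) (δ : ℕ → Fin D → ℝ) : Fin d → ℝ :=
  fun i => a x1 i * s + (∑ j, b x2 i j * ∑ m ∈ Finset.range M, δ m j)
    + ∑ j, ∑ k, h3 x2 i j k *
        ((∑ m ∈ Finset.range M, δ m j) * (∑ m ∈ Finset.range M, δ m k)
          - Om j k * s - quadLevy M δ j k + quadLevy M δ k j)

section AuxEqualExpectations
open MeasureTheory Real Filter ProbabilityTheory
open scoped NNReal ENNReal
open MeasureTheory Real Filter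

lemma integrable_sq_mul_exp_neg_mul_sq {b : ℝ} (hb : 0 < b) :
    Integrable (fun x : ℝ => x ^ 2 * rexp (-b * x ^ 2)) := by
  have h := integrable_rpow_mul_exp_neg_mul_sq hb (s := 2) (by norm_num)
  have : ∀ x : ℝ, x ^ (2:ℝ) = x ^ (2:ℕ) := fun x => by
    rw [← Real.rpow_natCast x 2]; norm_num
  simpa [this] using h

lemma integral_sq_mul_exp_neg_mul_sq {b : ℝ} (hb : 0 < b) :
    ∫ x : ℝ, x ^ 2 * rexp (-b * x ^ 2) = (2 * b)⁻¹ * Real.sqrt (π / b) := by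
  have hint2 := integrable_sq_mul_exp_neg_mul_sq hb
  have hinte : Integrable (fun x : ℝ => rexp (-b * x ^ 2)) := integrable_exp_neg_mul_sq hb
  have hintd : Integrable (fun x : ℝ => x ^ 2 * rexp (-b * x ^ 2) - (2*b)⁻¹ * rexp (-b * x ^ 2)) :=
    hint2.sub (hinte.const_mul _)
  have hF : ∀ x : ℝ, HasDerivAt (fun y => (-(2*b)⁻¹) * (y * rexp (-b*y^2)))
      (x^2 * rexp (-b*x^2) - (2*b)⁻¹ * rexp (-b*x^2)) x := by
    intro x
    have h1 : HasDerivAt (fun y : ℝ => -b * y^2) (-b * (2*x)) x := by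
      simpa using ((hasDerivAt_pow 2 x).const_mul (-b))
    have h2 : HasDerivAt (fun y : ℝ => rexp (-b*y^2)) (rexp (-b*x^2) * (-b*(2*x))) x := h1.exp
    have h3 : HasDerivAt (fun y : ℝ => y * rexp (-b*y^2)) (1 * rexp (-b*x^2) + x * (rexp (-b*x^2) * (-b*(2*x)))) x := (hasDerivAt_id x).mul h2
    have h4 := h3.const_mul (-(2*b)⁻¹)
    refine h4.congr_deriv ?_
    have hb' : b ≠ 0 := ne_of_gt hb
    field_simp
    ring
  -- interval integral of the difference equals F R - F (-R)
  have key : ∀ R : ℝ, (∫ x in (-R)..R, (x ^ 2 * rexp (-b * x ^ 2) - (2*b)⁻¹ * rexp (-b * x ^ 2)))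
      = (-(2*b)⁻¹) * (R * rexp (-b*R^2)) - (-(2*b)⁻¹) * ((-R) * rexp (-b*(-R)^2)) := by
    intro R
    exact intervalIntegral.integral_eq_sub_of_hasDerivAt (fun x _ => hF x)
      hintd.intervalIntegrable
  have hlim1 : Tendsto (fun R : ℝ => ∫ x in (-R)..R,
      (x ^ 2 * rexp (-b * x ^ 2) - (2*b)⁻¹ * rexp (-b * x ^ 2))) atTop
      (nhds (∫ x : ℝ, (x ^ 2 * rexp (-b * x ^ 2) - (2*b)⁻¹ * rexp (-b * x ^ 2)))) :=
    intervalIntegral_tendsto_integral hintd tendsto_neg_atTop_atBot tendsto_id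
  have hFto : Tendsto (fun R : ℝ => R * rexp (-b*R^2)) atTop (nhds 0) := by
    have h := rpow_mul_exp_neg_mul_sq_isLittleO_exp_neg hb 1
    have h2 : Tendsto (fun x : ℝ => rexp (-(1/2) * x)) atTop (nhds 0) := by
      apply Real.tendsto_exp_atBot.comp
      have : Tendsto (fun x : ℝ => (1/2 : ℝ) * x) atTop atTop :=
        tendsto_id.const_mul_atTop (by norm_num)
      have := tendsto_neg_atTop_atBot.comp this
      refine this.congr (fun x => by simp [Function.comp])
    have h3 := h.isBigO.trans_tendsto h2
    refine h3.congr' ?_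
    filter_upwards [eventually_ge_atTop (0:ℝ)] with x hx
    rw [Real.rpow_one]
  have hlim2 : Tendsto (fun R : ℝ => (-(2*b)⁻¹) * (R * rexp (-b*R^2))
      - (-(2*b)⁻¹) * ((-R) * rexp (-b*(-R)^2)) ) atTop (nhds 0) := by
    have : Tendsto (fun R : ℝ => (-(2*b)⁻¹) * (R * rexp (-b*R^2)) * 2) atTop (nhds 0) := by
      simpa using ((hFto.const_mul (-(2*b)⁻¹)).mul_const 2)
    refine this.congr (fun R => by ring_nf)
  have h0 : (∫ x : ℝ, (x ^ 2 * rexp (-b * x ^ 2) - (2*b)⁻¹ * rexp (-b * x ^ 2))) = 0 := by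
    apply tendsto_nhds_unique hlim1
    exact (funext key ▸ hlim2 : _)
  rw [integral_sub hint2 (hinte.const_mul _)] at h0
  rw [integral_const_mul, integral_gaussian] at h0
  linarith


lemma gaussian_pdf_product (v : ℝ≥0) (hv : v ≠ 0) (g : ℝ → ℝ) :
    ∫ x, g x ∂(gaussianReal 0 v)
      = ∫ x, gaussianPDFReal 0 v x * g x := by
  rw [gaussianReal_of_var_ne_zero 0 hv]
  have h0 : (gaussianPDF 0 v) = fun x => ((Real.toNNReal (gaussianPDFReal 0 v x) : ℝ≥0) : ℝ≥0∞) := by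
    funext x; rfl
  rw [h0, integral_withDensity_eq_integral_smul
    ((measurable_gaussianPDFReal 0 v).real_toNNReal) g]
  congr 1; funext x
  rw [NNReal.smul_def, Real.coe_toNNReal _ (gaussianPDFReal_nonneg 0 v x), smul_eq_mul]

lemma gaussian_integrable_product (v : ℝ≥0) (hv : v ≠ 0) {g : ℝ → ℝ} (hg : Measurable g)
    (hi : Integrable (fun x => gaussianPDFReal 0 v x * g x)) :
    Integrable g (gaussianReal 0 v) := by
  rw [gaussianReal_of_var_ne_zero 0 hv]
  have h0 : (gaussianPDF 0 v) = fun x => ((Real.toNNReal (gaussianPDFReal 0 v x) : ℝ≥0) : ℝ≥0∞) := by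
    funext x; rfl
  rw [h0, integrable_withDensity_iff_integrable_smul
    ((measurable_gaussianPDFReal 0 v).real_toNNReal)]
  refine hi.congr (Eventually.of_forall fun x => ?_)
  show _ = (gaussianPDFReal 0 v x).toNNReal • g x
  rw [NNReal.smul_def, Real.coe_toNNReal _ (gaussianPDFReal_nonneg 0 v x), smul_eq_mul]

lemma gaussianPDFReal_zero_eq (v : ℝ≥0) (x : ℝ) :
    gaussianPDFReal 0 v x = (Real.sqrt (2 * π * v))⁻¹ * rexp (-(2 * (v:ℝ))⁻¹ * x ^ 2) := by
  rw [gaussianPDFReal]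
  congr 1
  rw [sub_zero]
  congr 1
  field_simp

lemma integrable_id_gaussian (v : ℝ≥0) : Integrable (fun x : ℝ => x) (gaussianReal 0 v) := by
  by_cases hv : v = 0
  · subst hv; rw [gaussianReal_zero_var]; exact (integrable_const 0).congr (by rw [Filter.EventuallyEq, ae_dirac_eq]; simp)
  · have hvpos : 0 < (v:ℝ) := by positivity
    have hb : 0 < (2 * (v:ℝ))⁻¹ := by positivity
    refine gaussian_integrable_product v hv measurable_id ?_
    have : Integrable (fun x : ℝ => (Real.sqrt (2 * π * v))⁻¹ * (x * rexp (-(2 * (v:ℝ))⁻¹ * x ^ 2))) :=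
      (integrable_mul_exp_neg_mul_sq hb).const_mul _
    refine this.congr (Eventually.of_forall fun x => ?_)
    simp only [gaussianPDFReal_zero_eq]; ring

lemma integral_id_gaussian (v : ℝ≥0) : ∫ x, x ∂(gaussianReal 0 v) = 0 := by
  by_cases hv : v = 0
  · subst hv; rw [gaussianReal_zero_var, integral_dirac]
  · rw [gaussian_pdf_product v hv]
    have hodd : ∀ x : ℝ, gaussianPDFReal 0 v (-x) * (-x) = -(gaussianPDFReal 0 v x * x) := by
      intro x
      rw [gaussianPDFReal_zero_eq, gaussianPDFReal_zero_eq, neg_sq]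
      ring
    have h := MeasureTheory.integral_neg_eq_self (fun x => gaussianPDFReal 0 v x * x) volume
    simp only [hodd, integral_neg] at h
    linarith

lemma integrable_sq_gaussian (v : ℝ≥0) : Integrable (fun x : ℝ => x ^ 2) (gaussianReal 0 v) := by
  by_cases hv : v = 0
  · subst hv; rw [gaussianReal_zero_var]; exact (integrable_const 0).congr (by rw [Filter.EventuallyEq, ae_dirac_eq]; simp)
  · have hb : 0 < (2 * (v:ℝ))⁻¹ := by positivity
    refine gaussian_integrable_product v hv (by fun_prop) ?_
    have : Integrable (fun x : ℝ => (Real.sqrt (2 * π * v))⁻¹ * (x ^ 2 * rexp (-(2 * (v:ℝ))⁻¹ * x ^ 2))) :=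
      (integrable_sq_mul_exp_neg_mul_sq hb).const_mul _
    refine this.congr (Eventually.of_forall fun x => ?_)
    simp only [gaussianPDFReal_zero_eq]; ring

lemma integral_sq_gaussian (v : ℝ≥0) : ∫ x, x ^ 2 ∂(gaussianReal 0 v) = v := by
  by_cases hv : v = 0
  · subst hv; rw [gaussianReal_zero_var, integral_dirac]; simp
  · have hvpos : 0 < (v:ℝ) := by positivity
    have hb : 0 < (2 * (v:ℝ))⁻¹ := by positivity
    rw [gaussian_pdf_product v hv]
    have h1 : (fun x => gaussianPDFReal 0 v x * x ^ 2)
        = fun x => (Real.sqrt (2 * π * v))⁻¹ * (x ^ 2 * rexp (-(2 * (v:ℝ))⁻¹ * x ^ 2)) := by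
      funext x; rw [gaussianPDFReal_zero_eq]; ring
    rw [h1, integral_const_mul, integral_sq_mul_exp_neg_mul_sq hb]
    have h2 : (2 * (2 * (v:ℝ))⁻¹)⁻¹ = (v:ℝ) := by field_simp
    have h3 : Real.sqrt (π / (2 * (v:ℝ))⁻¹) = Real.sqrt (2 * π * v) := by
      congr 1; field_simp
    rw [h2, h3]
    have h4 : Real.sqrt (2 * π * v) ≠ 0 := by
      refine ne_of_gt (Real.sqrt_pos.mpr ?_)
      have := Real.pi_pos; positivity
    field_simp

lemma map_gaussian_moments {Ω₀ : Type*} [MeasurableSpace Ω₀] {μ : Measure Ω₀} {X : Ω₀ → ℝ}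
    (hX : Measurable X) {v : ℝ≥0} (h : Measure.map X μ = gaussianReal 0 v) :
    Integrable X μ ∧ (∫ ω, X ω ∂μ) = 0 ∧ Integrable (fun ω => X ω ^ 2) μ
      ∧ (∫ ω, X ω ^ 2 ∂μ) = (v : ℝ) := by
  have h1 : Integrable X μ := by
    have hi := integrable_id_gaussian v
    rw [← h] at hi
    exact (integrable_map_measure aestronglyMeasurable_id hX.aemeasurable).mp hi
  have h2 : (∫ ω, X ω ∂μ) = 0 := by
    have hi := integral_id_gaussian v
    rw [← h] at hi
    rwa [integral_map (f := fun x : ℝ => x) hX.aemeasurable (measurable_id.stronglyMeasurable.aestronglyMeasurable)] at hi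
  have h3 : Integrable (fun ω => X ω ^ 2) μ := by
    have hi := integrable_sq_gaussian v
    rw [← h] at hi
    exact (integrable_map_measure (by fun_prop) hX.aemeasurable).mp hi
  have h4 : (∫ ω, X ω ^ 2 ∂μ) = (v : ℝ) := by
    have hi := integral_sq_gaussian v
    rw [← h] at hi
    rwa [integral_map (f := fun x : ℝ => x ^ 2) hX.aemeasurable (by fun_prop)] at hi
  exact ⟨h1, h2, h3, h4⟩

lemma integrable_lip_comp {d : ℕ} {Ω₀ : Type*} [MeasurableSpace Ω₀] {μ : Measure Ω₀}
    [IsProbabilityMeasure μ] {K : NNReal} {g : (Fin d → ℝ) → ℝ} (hg : LipschitzWith K g)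
    {F : Ω₀ → Fin d → ℝ} (hF : Measurable F) (hFi : ∀ i, Integrable (fun ω => F ω i) μ) :
    Integrable (fun ω => g (F ω)) μ := by
  refine Integrable.mono' (g := fun ω => |g 0| + (K : ℝ) * ∑ i, |F ω i|)
    ((integrable_const _).add
      ((integrable_finset_sum _ (fun i _ => (hFi i).abs)).const_mul _))
    ((hg.continuous.measurable.comp hF).aestronglyMeasurable)
    (Eventually.of_forall fun ω => ?_)
  have h1 : |g (F ω) - g 0| ≤ (K : ℝ) * ‖F ω - 0‖ := by
    simpa [dist_eq_norm] using hg.dist_le_mul (F ω) 0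
  have h2 : ‖F ω - 0‖ ≤ ∑ i, |F ω i| := by
    rw [sub_zero]
    have hnn : (0:ℝ) ≤ ∑ i, |F ω i| := Finset.sum_nonneg fun i _ => abs_nonneg _
    refine (pi_norm_le_iff_of_nonneg hnn).mpr fun i => ?_
    rw [Real.norm_eq_abs]
    exact Finset.single_le_sum (fun j _ => abs_nonneg (F ω j)) (Finset.mem_univ i)
  have h3 : |g (F ω)| ≤ |g 0| + |g (F ω) - g 0| := by
    have := abs_sub_abs_le_abs_sub (g (F ω)) (g 0)
    linarith [abs_nonneg (g (F ω) - g 0)]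
  have h4 : (K : ℝ) * ‖F ω - 0‖ ≤ (K : ℝ) * ∑ i, |F ω i| :=
    mul_le_mul_of_nonneg_left h2 (by positivity)
  calc ‖g (F ω)‖ = |g (F ω)| := rfl
    _ ≤ |g 0| + |g (F ω) - g 0| := h3
    _ ≤ |g 0| + (K : ℝ) * ∑ i, |F ω i| := by linarith

lemma quadLevy_congr {D : ℕ} {M : ℕ} {δ δ' : ℕ → Fin D → ℝ}
    (hag : ∀ m < M, δ m = δ' m) (j k : Fin D) :
    quadLevy M δ j k = quadLevy M δ' j k := by
  unfold quadLevy
  refine Finset.sum_congr rfl fun m hm => ?_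
  rw [Finset.mem_Icc] at hm
  have hmM : m < M := by omega
  rw [hag m hmM]
  congr 1
  refine Finset.sum_congr rfl fun q hq => ?_
  rw [Finset.mem_range] at hq
  rw [hag q (by omega)]

lemma DcM_congr {d D : ℕ}
    (a : (Fin d → ℝ) → Fin d → ℝ) (b : (Fin d → ℝ) → Fin d → Fin D → ℝ)
    (h3 : (Fin d → ℝ) → Fin d → Fin D → Fin D → ℝ) (Om : Fin D → Fin D → ℝ)
    (M : ℕ) (x1 x2 : Fin d → ℝ) (s : ℝ) {δ δ' : ℕ → Fin D → ℝ}
    (hag : ∀ m < M, δ m = δ' m) :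
    DcM a b h3 Om M x1 x2 s δ = DcM a b h3 Om M x1 x2 s δ' := by
  have hsum : ∀ j : Fin D, ∑ m ∈ Finset.range M, δ m j = ∑ m ∈ Finset.range M, δ' m j := by
    intro j
    refine Finset.sum_congr rfl fun m hm => ?_
    rw [Finset.mem_range] at hm
    rw [hag m hm]
  unfold DcM
  funext i
  congr 1
  · congr 1
    refine Finset.sum_congr rfl fun j _ => by rw [hsum j]
  · refine Finset.sum_congr rfl fun j _ => Finset.sum_congr rfl fun k _ => ?_
    rw [hsum j, hsum k, quadLevy_congr hag j k, quadLevy_congr hag k j]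

section MeasHelpers
variable {d D : ℕ} {α : Type*} [MeasurableSpace α]
  {a : (Fin d → ℝ) → Fin d → ℝ} {b : (Fin d → ℝ) → Fin d → Fin D → ℝ}
  {h3 : (Fin d → ℝ) → Fin d → Fin D → Fin D → ℝ} {Om : Fin D → Fin D → ℝ}

lemma measurable_Df_comp {Ka Kb Kh : NNReal}
    (ha : ∀ i, LipschitzWith Ka fun x => a x i)
    (hb : ∀ i j, LipschitzWith Kb fun x => b x i j)
    (hh : ∀ i j k, LipschitzWith Kh fun x => h3 x i j k)
    {X : α → Fin d → ℝ} {W : α → Fin D → ℝ} (hX : Measurable X) (hW : Measurable W) (s : ℝ) :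
    Measurable fun t => Df a b h3 Om (X t) s (W t) := by
  apply measurable_pi_lambda _ fun i => ?_
  unfold Df
  apply Measurable.add
  apply Measurable.add
  · exact ((ha i).continuous.measurable.comp hX).mul_const _
  · exact Finset.measurable_sum _ fun j _ =>
      ((hb i j).continuous.measurable.comp hX).mul ((measurable_pi_apply j).comp hW)
  · exact Finset.measurable_sum _ fun j _ => Finset.measurable_sum _ fun k _ =>
      ((hh i j k).continuous.measurable.comp hX).mul
        ((((measurable_pi_apply j).comp hW).mul ((measurable_pi_apply k).comp hW)).sub
          measurable_const)

lemma measurable_DcM_comp {Ka Kb Kh : NNReal}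
    (ha : ∀ i, LipschitzWith Ka fun x => a x i)
    (hb : ∀ i j, LipschitzWith Kb fun x => b x i j)
    (hh : ∀ i j k, LipschitzWith Kh fun x => h3 x i j k)
    (M : ℕ) {X1 X2 : α → Fin d → ℝ} {δ : α → ℕ → Fin D → ℝ}
    (hX1 : Measurable X1) (hX2 : Measurable X2)
    (hδ : ∀ m j, Measurable fun t => δ t m j) (s : ℝ) :
    Measurable fun t => DcM a b h3 Om M (X1 t) (X2 t) s (δ t) := by
  have hsum : ∀ j : Fin D, Measurable fun t => ∑ m ∈ Finset.range M, δ t m j :=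
    fun j => Finset.measurable_sum _ fun m _ => hδ m j
  have hql : ∀ j k : Fin D, Measurable fun t => quadLevy M (δ t) j k := by
    intro j k
    unfold quadLevy
    exact Finset.measurable_sum _ fun m _ =>
      (hδ m k).mul (Finset.measurable_sum _ fun q _ => hδ q j)
  apply measurable_pi_lambda _ fun i => ?_
  unfold DcM
  apply Measurable.add
  apply Measurable.add
  · exact ((ha i).continuous.measurable.comp hX1).mul_const _
  · exact Finset.measurable_sum _ fun j _ =>
      ((hb i j).continuous.measurable.comp hX2).mul (hsum j)
  · exact Finset.measurable_sum _ fun j _ => Finset.measurable_sum _ fun k _ =>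
      ((hh i j k).continuous.measurable.comp hX2).mul
        (((((hsum j).mul (hsum k)).sub measurable_const).sub (hql j k)).add (hql k j))

end MeasHelpers

end AuxEqualExpectations

theorem equal_expectations_general_M
    (d D : ℕ) (hd : 1 ≤ d) (hD : 1 ≤ D)
    (a : (Fin d → ℝ) → Fin d → ℝ)
    (b : (Fin d → ℝ) → Fin d → Fin D → ℝ)
    (h3 : (Fin d → ℝ) → Fin d → Fin D → Fin D → ℝ)
    (Ka Kb Kh : NNReal)
    (ha : ∀ i, LipschitzWith Ka fun x => a x i)
    (hb : ∀ i j, LipschitzWith Kb fun x => b x i j)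
    (hhl : ∀ i j k, LipschitzWith Kh fun x => h3 x i j k)
    (Om : Fin D → Fin D → ℝ)
    (hOm_symm : ∀ j k, Om j k = Om k j)
    (hOm_psd : ∀ u : Fin D → ℝ, 0 ≤ ∑ j, ∑ k, u j * Om j k * u k)
    (M : ℕ) (hM : 2 ≤ M) (T : ℝ) (hT : 0 < T) (N : ℕ) (hN : 1 ≤ N)
    (Ω₀ : Type*) [MeasurableSpace Ω₀] (μ : Measure Ω₀) [IsProbabilityMeasure μ]
    (δW : ℕ → ℕ → Ω₀ → Fin D → ℝ)
    (hmeas : ∀ n m, Measurable (δW n m))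
    (hindep : iIndepFun
      (fun q : Fin N × Fin M => δW ↑q.1 ↑q.2) μ)
    (hgauss : ∀ n < N, ∀ m < M, ∀ u : Fin D → ℝ,
      Measure.map (fun ω => ∑ j, u j * δW n m ω j) μ
        = gaussianReal 0 (Real.toNNReal ((T / ↑N / ↑M) * ∑ j, ∑ k, u j * Om j k * u k)))
    (S0 : Fin d → ℝ)
    (Sstar Sc : ℕ → Ω₀ → Fin d → ℝ)
    (hstar0 : ∀ ω, Sstar 0 ω = S0)
    (hstar : ∀ n ω, Sstar (n + 1) ω = Sstar n ω
      + Df a b h3 Om (Sstar n ω) (T / ↑N) (∑ m ∈ Finset.range M, δW n m ω))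
    (hc0 : ∀ ω, Sc 0 ω = S0)
    (hc : ∀ n ω, Sc (n + 1) ω = Sc n ω
      + DcM a b h3 Om M (Sstar n ω) (Sc n ω) (T / ↑N) (fun m => δW n m ω)) :
    ∀ n ≤ N, ∀ i, ∫ ω, Sstar n ω i ∂μ = ∫ ω, Sc n ω i ∂μ := by
  classical
  have hMne : (M : ℝ) ≠ 0 := by
    have : 0 < M := by omega
    exact_mod_cast this.ne'
  have hδt_nonneg : 0 ≤ T / ↑N / ↑M := by
    have h1 : (0:ℝ) ≤ (N:ℝ) := Nat.cast_nonneg N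
    have h2 : (0:ℝ) ≤ (M:ℝ) := Nat.cast_nonneg M
    exact div_nonneg (div_nonneg hT.le h1) h2
  have hXmeas : ∀ n m (j : Fin D), Measurable fun ω => δW n m ω j :=
    fun n m j => (measurable_pi_apply j).comp (hmeas n m)
  -- single coordinate extraction
  have hsingle : ∀ (g : Fin D → ℝ) (j : Fin D), (∑ j', (Pi.single j 1 : Fin D → ℝ) j' * g j') = g j := by
    intro g j
    rw [Finset.sum_eq_single j]
    · simp
    · intro j' _ hj'; simp [Pi.single_apply, hj']
    · intro hj; exact absurd (Finset.mem_univ j) hj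
  have hBil : ∀ j k : Fin D,
      (∑ j', ∑ k', (Pi.single j 1 : Fin D → ℝ) j' * Om j' k' * (Pi.single k 1 : Fin D → ℝ) k') = Om j k := by
    intro j k
    rw [Finset.sum_eq_single j]
    · rw [Finset.sum_eq_single k]
      · simp
      · intro k' _ hk'; simp [Pi.single_apply, hk']
      · intro hk; exact absurd (Finset.mem_univ k) hk
    · intro j' _ hj'
      refine Finset.sum_eq_zero fun k' _ => ?_
      simp [Pi.single_apply, hj']
    · intro hj; exact absurd (Finset.mem_univ j) hj
  -- Gaussian facts for linear combinations
  have hlin : ∀ n, n < N → ∀ m, m < M → ∀ u : Fin D → ℝ,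
      Integrable (fun ω => ∑ j, u j * δW n m ω j) μ ∧
      (∫ ω, ∑ j, u j * δW n m ω j ∂μ) = 0 ∧
      Integrable (fun ω => (∑ j, u j * δW n m ω j) ^ 2) μ ∧
      (∫ ω, (∑ j, u j * δW n m ω j) ^ 2 ∂μ)
        = (T / ↑N / ↑M) * ∑ j, ∑ k, u j * Om j k * u k := by
    intro n hn m hm u
    have hmY : Measurable fun ω => ∑ j, u j * δW n m ω j :=
      Finset.measurable_sum _ fun j _ => ((hXmeas n m j).const_mul _)
    obtain ⟨h1, h2, h3', h4⟩ := map_gaussian_moments hmY (hgauss n hn m hm u)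
    exact ⟨h1, h2, h3', by
      rw [h4, Real.coe_toNNReal _ (mul_nonneg hδt_nonneg (hOm_psd u))]⟩
  -- first moments
  have hX1 : ∀ n, n < N → ∀ m, m < M → ∀ j : Fin D,
      Integrable (fun ω => δW n m ω j) μ ∧ (∫ ω, δW n m ω j ∂μ) = 0 := by
    intro n hn m hm j
    obtain ⟨h1, h2, _, _⟩ := hlin n hn m hm (Pi.single j 1)
    have he : (fun ω => ∑ j', (Pi.single j 1 : Fin D → ℝ) j' * δW n m ω j')
        = fun ω => δW n m ω j := funext fun ω => hsingle _ j
    rw [he] at h1 h2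
    exact ⟨h1, h2⟩
  -- second moments at equal (n,m)
  have hX2 : ∀ n, n < N → ∀ m, m < M → ∀ j k : Fin D,
      Integrable (fun ω => δW n m ω j * δW n m ω k) μ ∧
      (∫ ω, δW n m ω j * δW n m ω k ∂μ) = (T / ↑N / ↑M) * Om j k := by
    intro n hn m hm j k
    obtain ⟨_, _, hj2, hj4⟩ := hlin n hn m hm (Pi.single j 1)
    obtain ⟨_, _, hk2, hk4⟩ := hlin n hn m hm (Pi.single k 1)
    obtain ⟨_, _, hu2, hu4⟩ := hlin n hn m hm (Pi.single j 1 + Pi.single k 1)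
    have hej : (fun ω => (∑ j', (Pi.single j 1 : Fin D → ℝ) j' * δW n m ω j') ^ 2)
        = fun ω => δW n m ω j ^ 2 := funext fun ω => by rw [hsingle]
    have hek : (fun ω => (∑ j', (Pi.single k 1 : Fin D → ℝ) j' * δW n m ω j') ^ 2)
        = fun ω => δW n m ω k ^ 2 := funext fun ω => by rw [hsingle]
    have heu : (fun ω => (∑ j', ((Pi.single j 1 + Pi.single k 1 : Fin D → ℝ)) j' * δW n m ω j') ^ 2)
        = fun ω => (δW n m ω j + δW n m ω k) ^ 2 := by
      funext ω
      congr 1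
      simp only [Pi.add_apply, add_mul, Finset.sum_add_distrib]
      rw [hsingle, hsingle]
    rw [hej] at hj2 hj4
    rw [hek] at hk2 hk4
    rw [heu] at hu2 hu4
    rw [hBil j j] at hj4
    rw [hBil k k] at hk4
    have hQu : (∑ j', ∑ k', ((Pi.single j 1 + Pi.single k 1 : Fin D → ℝ)) j' * Om j' k'
          * ((Pi.single j 1 + Pi.single k 1 : Fin D → ℝ)) k')
        = Om j j + Om j k + Om k j + Om k k := by
      have hterm : ∀ j' k' : Fin D,
          ((Pi.single j 1 + Pi.single k 1 : Fin D → ℝ)) j' * Om j' k' * ((Pi.single j 1 + Pi.single k 1 : Fin D → ℝ)) k'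
          = (Pi.single j 1 : Fin D → ℝ) j' * Om j' k' * (Pi.single j 1 : Fin D → ℝ) k'
            + (Pi.single j 1 : Fin D → ℝ) j' * Om j' k' * (Pi.single k 1 : Fin D → ℝ) k'
            + (Pi.single k 1 : Fin D → ℝ) j' * Om j' k' * (Pi.single j 1 : Fin D → ℝ) k'
            + (Pi.single k 1 : Fin D → ℝ) j' * Om j' k' * (Pi.single k 1 : Fin D → ℝ) k' := by
        intro j' k'; simp only [Pi.add_apply]; ring
      simp only [hterm, Finset.sum_add_distrib]
      rw [hBil j j, hBil j k, hBil k j, hBil k k]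
    rw [hQu] at hu4
    have hptw : (fun ω => δW n m ω j * δW n m ω k)
        = fun ω => ((δW n m ω j + δW n m ω k) ^ 2 - δW n m ω j ^ 2 - δW n m ω k ^ 2) / 2 := by
      funext ω; ring
    constructor
    · rw [hptw]; exact ((hu2.sub hj2).sub hk2).div_const 2
    · have hsub1 : Integrable (fun ω => (δW n m ω j + δW n m ω k) ^ 2 - δW n m ω j ^ 2) μ :=
        hu2.sub hj2
      rw [hptw, integral_div, integral_sub hsub1 hk2, integral_sub hu2 hj2,
        hu4, hj4, hk4, hOm_symm k j]
      ring
  -- cross moments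
  have hXcross : ∀ n, n < N → ∀ m, m < M → ∀ n', n' < N → ∀ m', m' < M →
      (n, m) ≠ (n', m') → ∀ j k : Fin D,
      Integrable (fun ω => δW n m ω j * δW n' m' ω k) μ ∧
      (∫ ω, δW n m ω j * δW n' m' ω k ∂μ) = 0 := by
    intro n hn m hm n' hn' m' hm' hne j k
    have hqne : (⟨⟨n, hn⟩, ⟨m, hm⟩⟩ : Fin N × Fin M) ≠ ⟨⟨n', hn'⟩, ⟨m', hm'⟩⟩ := by
      intro hcon
      exact hne (by simpa using congrArg (fun q : Fin N × Fin M => ((q.1 : ℕ), (q.2 : ℕ))) hcon)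
    have hI := hindep.indepFun hqne
    have hI2 := hI.comp (measurable_pi_apply j) (measurable_pi_apply k)
    have hIj := hX1 n hn m hm j
    have hIk := hX1 n' hn' m' hm' k
    refine ⟨hI2.integrable_mul hIj.1 hIk.1, ?_⟩
    have hmul := hI2.integral_mul_eq_mul_integral hIj.1.1 hIk.1.1
    calc (∫ ω, δW n m ω j * δW n' m' ω k ∂μ)
        = (∫ ω, δW n m ω j ∂μ) * ∫ ω, δW n' m' ω k ∂μ := hmul
      _ = 0 := by rw [hIj.2, hIk.2, mul_zero]
  -- representation of the paths as measurable functions of past increments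
  set SS : ℕ → Finset (Fin N × Fin M) :=
    fun n' => Finset.univ.filter (fun q : Fin N × Fin M => (q.1 : ℕ) < n') with hSS
  have hRep : ∀ n, n ≤ N →
      ∃ φ : ({q : Fin N × Fin M // q ∈ SS n} → (Fin D → ℝ)) → (Fin d → ℝ) × (Fin d → ℝ),
        Measurable φ ∧
        ∀ ω, φ (fun q => δW (q.1.1 : ℕ) (q.1.2 : ℕ) ω)
          = (Sstar n ω, Sc n ω) := by
    intro n
    induction n with
    | zero =>
      intro _
      exact ⟨fun _ => (S0, S0), measurable_const, fun ω => by rw [hstar0 ω, hc0 ω]⟩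
    | succ n ih =>
      intro hn1
      have hn : n < N := hn1
      obtain ⟨φ, hφm, hφeq⟩ := ih (le_of_lt hn)
      have hmem1 : ∀ q : {q : Fin N × Fin M // q ∈ SS n}, q.1 ∈ SS (n+1) := by
        intro q
        have hq := q.2
        simp only [hSS, Finset.mem_filter, Finset.mem_univ, true_and] at hq ⊢
        omega
      have hmem2 : ∀ m2 : Fin M, ((⟨n, hn⟩, m2) : Fin N × Fin M) ∈ SS (n+1) := by
        intro m2
        simp [hSS, Finset.mem_filter]
      refine ⟨fun y =>
        ((φ (fun q => y ⟨q.1, hmem1 q⟩)).1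
            + Df a b h3 Om (φ (fun q => y ⟨q.1, hmem1 q⟩)).1 (T / ↑N)
              (∑ m2 : Fin M, y ⟨(⟨n, hn⟩, m2), hmem2 m2⟩),
         (φ (fun q => y ⟨q.1, hmem1 q⟩)).2
            + DcM a b h3 Om M (φ (fun q => y ⟨q.1, hmem1 q⟩)).1
              (φ (fun q => y ⟨q.1, hmem1 q⟩)).2 (T / ↑N)
              (fun m' => if h : m' < M then y ⟨(⟨n, hn⟩, ⟨m', h⟩), hmem2 ⟨m', h⟩⟩ else 0)),
        ?_, ?_⟩
      · -- measurability
        have hresm : Measurable fun (y : ({q : Fin N × Fin M // q ∈ SS (n+1)} → (Fin D → ℝ)))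
            (q : {q : Fin N × Fin M // q ∈ SS n}) => y ⟨q.1, hmem1 q⟩ :=
          measurable_pi_lambda _ fun q => measurable_pi_apply _
        have hp := hφm.comp hresm
        have hp1 : Measurable fun (y : ({q : Fin N × Fin M // q ∈ SS (n+1)} → (Fin D → ℝ))) =>
            (φ (fun q => y ⟨q.1, hmem1 q⟩)).1 :=
          measurable_fst.comp hp
        have hp2 : Measurable fun (y : ({q : Fin N × Fin M // q ∈ SS (n+1)} → (Fin D → ℝ))) =>
            (φ (fun q => y ⟨q.1, hmem1 q⟩)).2 :=
          measurable_snd.comp hp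
        have hW : Measurable fun (y : ({q : Fin N × Fin M // q ∈ SS (n+1)} → (Fin D → ℝ))) =>
            ∑ m2 : Fin M, y ⟨(⟨n, hn⟩, m2), hmem2 m2⟩ :=
          Finset.measurable_sum _ fun m2 _ => measurable_pi_apply _
        have hδm : ∀ (m' : ℕ) (jj : Fin D),
            Measurable fun (y : ({q : Fin N × Fin M // q ∈ SS (n+1)} → (Fin D → ℝ))) =>
              (if h : m' < M then y ⟨(⟨n, hn⟩, ⟨m', h⟩), hmem2 ⟨m', h⟩⟩ else 0) jj := by
          intro m' jj
          by_cases h : m' < M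
          · simp only [dif_pos h]
            exact (measurable_pi_apply jj).comp (measurable_pi_apply _)
          · simp only [dif_neg h, Pi.zero_apply]
            exact measurable_const
        exact (hp1.add (measurable_Df_comp ha hb hhl hp1 hW _)).prodMk
          (hp2.add (measurable_DcM_comp ha hb hhl M hp1 hp2 hδm _))
      · -- pointwise identity
        intro ω
        refine Prod.ext ?_ ?_
        · show (φ (fun q : {q : Fin N × Fin M // q ∈ SS n} =>
              δW (q.1.1 : ℕ) (q.1.2 : ℕ) ω)).1
            + Df a b h3 Om
              (φ (fun q : {q : Fin N × Fin M // q ∈ SS n} =>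
                δW (q.1.1 : ℕ) (q.1.2 : ℕ) ω)).1 (T / ↑N)
              (∑ m2 : Fin M, δW n (m2 : ℕ) ω) = (Sstar (n+1) ω, Sc (n+1) ω).1
          rw [hφeq ω, hstar n ω, Finset.sum_range fun m => δW n m ω]
        · show (φ (fun q : {q : Fin N × Fin M // q ∈ SS n} =>
              δW (q.1.1 : ℕ) (q.1.2 : ℕ) ω)).2
            + DcM a b h3 Om M
              (φ (fun q : {q : Fin N × Fin M // q ∈ SS n} =>
                δW (q.1.1 : ℕ) (q.1.2 : ℕ) ω)).1
              (φ (fun q : {q : Fin N × Fin M // q ∈ SS n} =>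
                δW (q.1.1 : ℕ) (q.1.2 : ℕ) ω)).2 (T / ↑N)
              (fun m' => if h : m' < M then δW n m' ω else 0) = (Sstar (n+1) ω, Sc (n+1) ω).2
          have hD := DcM_congr (δ := fun m' => if h : m' < M then δW n m' ω else 0)
            (δ' := fun m => δW n m ω) a b h3 Om M (Sstar n ω) (Sc n ω) (T / ↑N)
            (fun m' hm' => by simp only [dif_pos hm'])
          rw [hφeq ω, hc n ω, ← hD]
  -- measurability of the pair process
  have hpairMeas : ∀ n, n ≤ N → Measurable fun ω => (Sstar n ω, Sc n ω) := by
    intro n hn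
    obtain ⟨φ, hφm, hφeq⟩ := hRep n hn
    have hm1 : Measurable fun ω => φ (fun q : {q : Fin N × Fin M // q ∈ SS n} =>
        δW (q.1.1 : ℕ) (q.1.2 : ℕ) ω) :=
      hφm.comp (measurable_pi_lambda _ fun q => hmeas _ _)
    have heq : (fun ω => φ (fun q : {q : Fin N × Fin M // q ∈ SS n} =>
        δW (q.1.1 : ℕ) (q.1.2 : ℕ) ω))
        = fun ω => (Sstar n ω, Sc n ω) := funext hφeq
    rwa [heq] at hm1
  -- independence of the pair from the current increments
  have hIndepPair : ∀ n (hn : n < N),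
      IndepFun (fun ω => (Sstar n ω, Sc n ω)) (fun ω (m2 : Fin M) => δW n (m2 : ℕ) ω) μ := by
    intro n hn
    obtain ⟨φ, hφm, hφeq⟩ := hRep n (le_of_lt hn)
    set Tn : Finset (Fin N × Fin M) :=
      Finset.univ.filter (fun q : Fin N × Fin M => q.1 = ⟨n, hn⟩) with hTn
    have hdisj : Disjoint (SS n) Tn := by
      refine Finset.disjoint_left.mpr fun q hq hq' => ?_
      simp only [hSS, Finset.mem_filter, Finset.mem_univ, true_and] at hq
      simp only [hTn, Finset.mem_filter, Finset.mem_univ, true_and] at hq'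
      rw [hq'] at hq
      simp at hq
    have hbase := hindep.indepFun_finset (SS n) Tn hdisj (fun q => hmeas _ _)
    have hmemT : ∀ m2 : Fin M, ((⟨n, hn⟩, m2) : Fin N × Fin M) ∈ Tn := by
      intro m2; simp [hTn]
    have hΨm : Measurable fun (y : {q : Fin N × Fin M // q ∈ Tn} → (Fin D → ℝ))
        (m2 : Fin M) => y ⟨(⟨n, hn⟩, m2), hmemT m2⟩ :=
      measurable_pi_lambda _ fun m2 => measurable_pi_apply _
    have hcomp := hbase.comp hφm hΨm
    have h1 : (fun ω => (Sstar n ω, Sc n ω))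
        = fun ω => φ (fun q : {q : Fin N × Fin M // q ∈ SS n} =>
            δW (q.1.1 : ℕ) (q.1.2 : ℕ) ω) :=
      funext fun ω => (hφeq ω).symm
    rw [h1]
    exact hcomp
  -- main induction
  suffices hmain : ∀ n, n ≤ N →
      ((∀ i, Integrable (fun ω => Sstar n ω i) μ) ∧ (∀ i, Integrable (fun ω => Sc n ω i) μ) ∧
        ∀ i, (∫ ω, Sstar n ω i ∂μ) = ∫ ω, Sc n ω i ∂μ) by
    intro n hn i
    exact (hmain n hn).2.2 i
  intro n
  induction n with
  | zero =>
    intro _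
    refine ⟨fun i => ?_, fun i => ?_, fun i => ?_⟩
    · exact (integrable_const (S0 i)).congr
        (Filter.Eventually.of_forall fun ω => by simp [hstar0])
    · exact (integrable_const (S0 i)).congr
        (Filter.Eventually.of_forall fun ω => by simp [hc0])
    · have h1 : (fun ω => Sstar 0 ω i) = fun _ => S0 i := funext fun ω => by rw [hstar0 ω]
      have h2 : (fun ω => Sc 0 ω i) = fun _ => S0 i := funext fun ω => by rw [hc0 ω]
      rw [h1, h2]
  | succ n ih =>
    intro hn1
    have hn : n < N := hn1
    obtain ⟨ihs, ihc, ihe⟩ := ih (le_of_lt hn)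
    have hpm := hpairMeas n (le_of_lt hn)
    have hSsm : Measurable fun ω => Sstar n ω := measurable_fst.comp hpm
    have hScm : Measurable fun ω => Sc n ω := measurable_snd.comp hpm
    -- increments over the coarse step
    set dW : Fin D → Ω₀ → ℝ := fun j ω => ∑ m ∈ Finset.range M, δW n m ω j with hdW
    set LA : Fin D → Fin D → Ω₀ → ℝ := fun j k ω => quadLevy M (fun m => δW n m ω) j k with hLA
    have hdWint : ∀ j, Integrable (dW j) μ := fun j =>
      integrable_finset_sum _ fun m hm => (hX1 n hn m (Finset.mem_range.mp hm) j).1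
    have hdWzero : ∀ j, (∫ ω, dW j ω ∂μ) = 0 := by
      intro j
      rw [hdW]
      rw [integral_finset_sum _ fun m hm => (hX1 n hn m (Finset.mem_range.mp hm) j).1]
      exact Finset.sum_eq_zero fun m hm => (hX1 n hn m (Finset.mem_range.mp hm) j).2
    have hprod_fact : ∀ j k : Fin D, Integrable (fun ω => dW j ω * dW k ω) μ ∧
        (∫ ω, dW j ω * dW k ω ∂μ) = (T / ↑N) * Om j k := by
      intro j k
      have hterm : ∀ m ∈ Finset.range M, ∀ q ∈ Finset.range M,
          Integrable (fun ω => δW n m ω j * δW n q ω k) μ := by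
        intro m hm q hq
        by_cases hmq : m = q
        · subst hmq; exact (hX2 n hn m (Finset.mem_range.mp hm) j k).1
        · exact (hXcross n hn m (Finset.mem_range.mp hm) n hn q (Finset.mem_range.mp hq)
            (by simp [hmq]) j k).1
      have hexp : (fun ω => dW j ω * dW k ω)
          = fun ω => ∑ m ∈ Finset.range M, ∑ q ∈ Finset.range M, δW n m ω j * δW n q ω k := by
        funext ω
        rw [hdW]
        exact Finset.sum_mul_sum _ _ _ _
      constructor
      · rw [hexp]
        exact integrable_finset_sum _ fun m hm => integrable_finset_sum _ fun q hq =>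
          hterm m hm q hq
      · rw [hexp, integral_finset_sum _ (fun m hm =>
          integrable_finset_sum _ fun q hq => hterm m hm q hq)]
        have hinner : ∀ m ∈ Finset.range M,
            (∫ ω, ∑ q ∈ Finset.range M, δW n m ω j * δW n q ω k ∂μ)
              = (T / ↑N / ↑M) * Om j k := by
          intro m hm
          rw [integral_finset_sum _ (fun q hq => hterm m hm q hq)]
          have hval : ∀ q ∈ Finset.range M, (∫ ω, δW n m ω j * δW n q ω k ∂μ)
              = if m = q then (T / ↑N / ↑M) * Om j k else 0 := by
            intro q hq
            by_cases hmq : m = q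
            · subst hmq
              simp only [if_pos rfl]
              exact (hX2 n hn m (Finset.mem_range.mp hm) j k).2
            · simp only [if_neg hmq]
              exact (hXcross n hn m (Finset.mem_range.mp hm) n hn q (Finset.mem_range.mp hq)
                (by simp [hmq]) j k).2
          rw [Finset.sum_congr rfl hval, Finset.sum_ite_eq (Finset.range M) m
            (fun _ => (T / ↑N / ↑M) * Om j k), if_pos hm]
        rw [Finset.sum_congr rfl hinner, Finset.sum_const, Finset.card_range, nsmul_eq_mul]
        field_simp
      -- Lévy areas
    have hLAfact : ∀ j k : Fin D, Integrable (LA j k) μ ∧ (∫ ω, LA j k ω ∂μ) = 0 := by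
      intro j k
      have hexp : LA j k = fun ω => ∑ m ∈ Finset.Icc 1 (M-1), ∑ q ∈ Finset.range m,
          δW n m ω k * δW n q ω j := by
        funext ω
        rw [hLA]
        unfold quadLevy
        exact Finset.sum_congr rfl fun m hm => Finset.mul_sum _ _ _
      have hterm : ∀ m ∈ Finset.Icc 1 (M-1), ∀ q ∈ Finset.range m,
          Integrable (fun ω => δW n m ω k * δW n q ω j) μ ∧
          (∫ ω, δW n m ω k * δW n q ω j ∂μ) = 0 := by
        intro m hm q hq
        rw [Finset.mem_Icc] at hm
        rw [Finset.mem_range] at hq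
        have hmM : m < M := by omega
        have hqM : q < M := by omega
        have hne : (n, m) ≠ (n, q) := by
          simp only [ne_eq, Prod.mk.injEq, not_and]
          intro _; omega
        exact ⟨(hXcross n hn m hmM n hn q hqM hne k j).1,
          (hXcross n hn m hmM n hn q hqM hne k j).2⟩
      constructor
      · rw [hexp]
        exact integrable_finset_sum _ fun m hm => integrable_finset_sum _ fun q hq =>
          (hterm m hm q hq).1
      · rw [hexp, integral_finset_sum _ (fun m hm =>
          integrable_finset_sum _ fun q hq => (hterm m hm q hq).1)]
        refine Finset.sum_eq_zero fun m hm => ?_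
        rw [integral_finset_sum _ (fun q hq => (hterm m hm q hq).1)]
        exact Finset.sum_eq_zero fun q hq => (hterm m hm q hq).2
    -- combined weight factors
    have hVf : ∀ j k : Fin D,
        Integrable (fun ω => dW j ω * dW k ω - Om j k * (T / ↑N)) μ ∧
        (∫ ω, dW j ω * dW k ω - Om j k * (T / ↑N) ∂μ) = 0 := by
      intro j k
      refine ⟨(hprod_fact j k).1.sub (integrable_const _), ?_⟩
      rw [integral_sub (hprod_fact j k).1 (integrable_const _), (hprod_fact j k).2,
        integral_const]
      simp [measure_univ]
      ring
    have hVc : ∀ j k : Fin D,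
        Integrable (fun ω => dW j ω * dW k ω - Om j k * (T / ↑N) - LA j k ω + LA k j ω) μ ∧
        (∫ ω, dW j ω * dW k ω - Om j k * (T / ↑N) - LA j k ω + LA k j ω ∂μ) = 0 := by
      intro j k
      have hint : Integrable (fun ω => dW j ω * dW k ω - Om j k * (T / ↑N) - LA j k ω + LA k j ω) μ :=
        (((hVf j k).1.sub (hLAfact j k).1).add (hLAfact k j).1)
      refine ⟨hint, ?_⟩
      have hs1 : Integrable (fun ω => dW j ω * dW k ω - Om j k * (T / ↑N) - LA j k ω) μ :=
        (hVf j k).1.sub (hLAfact j k).1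
      rw [integral_add hs1 (hLAfact k j).1,
        integral_sub (hVf j k).1 (hLAfact j k).1, (hVf j k).2, (hLAfact j k).2,
        (hLAfact k j).2]
      ring
    -- independence-based product rule
    have hGV : ∀ (G V : Ω₀ → ℝ),
        (∃ g : (Fin d → ℝ) × (Fin d → ℝ) → ℝ, Measurable g ∧ ∀ ω, G ω = g (Sstar n ω, Sc n ω)) →
        (∃ ψ : (Fin M → Fin D → ℝ) → ℝ, Measurable ψ ∧
          ∀ ω, V ω = ψ (fun m2 : Fin M => δW n (m2 : ℕ) ω)) →
        Integrable G μ → Integrable V μ →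
        Integrable (fun ω => G ω * V ω) μ ∧
        (∫ ω, G ω * V ω ∂μ) = (∫ ω, G ω ∂μ) * ∫ ω, V ω ∂μ := by
      rintro G V ⟨g, hg, hGe⟩ ⟨ψ, hψ, hVe⟩ hGint hVint
      have hIgv0 := (hIndepPair n hn).comp hg hψ
      have hIgv : IndepFun G V μ := by
        have h1 : G = fun ω => g (Sstar n ω, Sc n ω) := funext hGe
        have h2 : V = fun ω => ψ (fun m2 : Fin M => δW n (m2 : ℕ) ω) := funext hVe
        rw [h1, h2]
        exact hIgv0
      exact ⟨hIgv.integrable_mul hGint hVint, hIgv.integral_mul_eq_mul_integral hGint.1 hVint.1⟩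
    -- ψ representations of the weight factors
    set extφ : (Fin M → Fin D → ℝ) → ℕ → Fin D → ℝ :=
      fun z m' => if h : m' < M then z ⟨m', h⟩ else 0 with hextφ
    have hextm : ∀ (m' : ℕ) (jj : Fin D),
        Measurable fun z : Fin M → Fin D → ℝ => extφ z m' jj := by
      intro m' jj
      rw [hextφ]
      by_cases h : m' < M
      · simp only [dif_pos h]
        exact (measurable_pi_apply jj).comp (measurable_pi_apply _)
      · simp only [dif_neg h, Pi.zero_apply]
        exact measurable_const
    have hagree : ∀ ω : Ω₀, ∀ m' < M,
        (fun m => δW n m ω) m' = extφ (fun m2 : Fin M => δW n (m2 : ℕ) ω) m' := by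
      intro ω m' hm'
      simp only [hextφ, dif_pos hm']
    have hΨbm : ∀ j : Fin D,
        Measurable fun z : Fin M → Fin D → ℝ => ∑ m ∈ Finset.range M, extφ z m j :=
      fun j => Finset.measurable_sum _ fun m _ => hextm m j
    have hVbe : ∀ (j : Fin D) (ω : Ω₀),
        dW j ω = (fun z : Fin M → Fin D → ℝ => ∑ m ∈ Finset.range M, extφ z m j)
          (fun m2 : Fin M => δW n (m2 : ℕ) ω) := by
      intro j ω
      rw [hdW]
      exact Finset.sum_congr rfl fun m hm =>
        congrFun (hagree ω m (Finset.mem_range.mp hm)) j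
    have hΨqm : ∀ j k : Fin D,
        Measurable fun z : Fin M → Fin D → ℝ => quadLevy M (extφ z) j k := by
      intro j k
      unfold quadLevy
      exact Finset.measurable_sum _ fun m _ =>
        (hextm m k).mul (Finset.measurable_sum _ fun q _ => hextm q j)
    have hLAe : ∀ (j k : Fin D) (ω : Ω₀),
        LA j k ω = quadLevy M (extφ (fun m2 : Fin M => δW n (m2 : ℕ) ω)) j k := by
      intro j k ω
      rw [hLA]
      exact quadLevy_congr (fun m hm => hagree ω m hm) j k
    -- decomposition of one step, starred path
    have hstar_dec : ∀ i : Fin d,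
        Integrable (fun ω => Sstar (n+1) ω i) μ ∧
        (∫ ω, Sstar (n+1) ω i ∂μ)
          = (∫ ω, Sstar n ω i ∂μ) + (∫ ω, a (Sstar n ω) i ∂μ) * (T / ↑N) := by
      intro i
      have hAint : Integrable (fun ω => a (Sstar n ω) i * (T / ↑N)) μ :=
        (integrable_lip_comp (ha i) hSsm ihs).mul_const _
      have hB : ∀ j : Fin D, Integrable (fun ω => b (Sstar n ω) i j * dW j ω) μ ∧
          (∫ ω, b (Sstar n ω) i j * dW j ω ∂μ) = 0 := by
        intro j
        obtain ⟨h1, h2⟩ := hGV (fun ω => b (Sstar n ω) i j) (dW j)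
          ⟨fun p => b p.1 i j, ((hb i j).continuous.measurable).comp measurable_fst,
            fun ω => rfl⟩
          ⟨fun z => ∑ m ∈ Finset.range M, extφ z m j, hΨbm j, hVbe j⟩
          (integrable_lip_comp (hb i j) hSsm ihs) (hdWint j)
        exact ⟨h1, by rw [h2, hdWzero j, mul_zero]⟩
      have hH : ∀ j k : Fin D,
          Integrable (fun ω => h3 (Sstar n ω) i j k * (dW j ω * dW k ω - Om j k * (T / ↑N))) μ ∧
          (∫ ω, h3 (Sstar n ω) i j k * (dW j ω * dW k ω - Om j k * (T / ↑N)) ∂μ) = 0 := by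
        intro j k
        obtain ⟨h1, h2⟩ := hGV (fun ω => h3 (Sstar n ω) i j k)
          (fun ω => dW j ω * dW k ω - Om j k * (T / ↑N))
          ⟨fun p => h3 p.1 i j k, ((hhl i j k).continuous.measurable).comp measurable_fst,
            fun ω => rfl⟩
          ⟨fun z => (∑ m ∈ Finset.range M, extφ z m j) * (∑ m ∈ Finset.range M, extφ z m k)
              - Om j k * (T / ↑N),
            ((hΨbm j).mul (hΨbm k)).sub measurable_const,
            fun ω => by
              show dW j ω * dW k ω - Om j k * (T / ↑N) = _
              rw [hVbe j ω, hVbe k ω]⟩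
          (integrable_lip_comp (hhl i j k) hSsm ihs) (hVf j k).1
        exact ⟨h1, by rw [h2, (hVf j k).2, mul_zero]⟩
      have hpt : (fun ω => Sstar (n+1) ω i) = fun ω => Sstar n ω i
          + a (Sstar n ω) i * (T / ↑N)
          + (∑ j, b (Sstar n ω) i j * dW j ω)
          + (∑ j, ∑ k, h3 (Sstar n ω) i j k * (dW j ω * dW k ω - Om j k * (T / ↑N))) := by
        funext ω
        rw [hstar n ω]
        simp only [Pi.add_apply, Df, Finset.sum_apply, hdW]
        ring
      have hBsum : Integrable (fun ω => ∑ j, b (Sstar n ω) i j * dW j ω) μ :=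
        integrable_finset_sum _ fun j _ => (hB j).1
      have hHsum : Integrable (fun ω => ∑ j, ∑ k,
          h3 (Sstar n ω) i j k * (dW j ω * dW k ω - Om j k * (T / ↑N))) μ :=
        integrable_finset_sum _ fun j _ => integrable_finset_sum _ fun k _ => (hH j k).1
      have hI1 : Integrable (fun ω => Sstar n ω i + a (Sstar n ω) i * (T / ↑N)) μ :=
        (ihs i).add hAint
      have hI2 : Integrable (fun ω => Sstar n ω i + a (Sstar n ω) i * (T / ↑N)
          + (∑ j, b (Sstar n ω) i j * dW j ω)) μ := hI1.add hBsum
      refine ⟨?_, ?_⟩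
      · rw [hpt]
        exact hI2.add hHsum
      · rw [hpt, integral_add hI2 hHsum,
          integral_add hI1 hBsum, integral_add (ihs i) hAint,
          integral_finset_sum _ (fun j _ => (hB j).1),
          integral_finset_sum _ (fun j _ => integrable_finset_sum _ fun k _ => (hH j k).1)]
        have hz1 : (∑ j, ∫ ω, b (Sstar n ω) i j * dW j ω ∂μ) = 0 :=
          Finset.sum_eq_zero fun j _ => (hB j).2
        have hz2 : (∑ j, ∫ ω, ∑ k,
            h3 (Sstar n ω) i j k * (dW j ω * dW k ω - Om j k * (T / ↑N)) ∂μ) = 0 := by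
          refine Finset.sum_eq_zero fun j _ => ?_
          rw [integral_finset_sum _ (fun k _ => (hH j k).1)]
          exact Finset.sum_eq_zero fun k _ => (hH j k).2
        rw [hz1, hz2, integral_mul_const]
        ring
    -- decomposition of one step, coarse path
    have hc_dec : ∀ i : Fin d,
        Integrable (fun ω => Sc (n+1) ω i) μ ∧
        (∫ ω, Sc (n+1) ω i ∂μ)
          = (∫ ω, Sc n ω i ∂μ) + (∫ ω, a (Sstar n ω) i ∂μ) * (T / ↑N) := by
      intro i
      have hAint : Integrable (fun ω => a (Sstar n ω) i * (T / ↑N)) μ :=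
        (integrable_lip_comp (ha i) hSsm ihs).mul_const _
      have hB : ∀ j : Fin D, Integrable (fun ω => b (Sc n ω) i j * dW j ω) μ ∧
          (∫ ω, b (Sc n ω) i j * dW j ω ∂μ) = 0 := by
        intro j
        obtain ⟨h1, h2⟩ := hGV (fun ω => b (Sc n ω) i j) (dW j)
          ⟨fun p => b p.2 i j, ((hb i j).continuous.measurable).comp measurable_snd,
            fun ω => rfl⟩
          ⟨fun z => ∑ m ∈ Finset.range M, extφ z m j, hΨbm j, hVbe j⟩
          (integrable_lip_comp (hb i j) hScm ihc) (hdWint j)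
        exact ⟨h1, by rw [h2, hdWzero j, mul_zero]⟩
      have hH : ∀ j k : Fin D,
          Integrable (fun ω => h3 (Sc n ω) i j k
            * (dW j ω * dW k ω - Om j k * (T / ↑N) - LA j k ω + LA k j ω)) μ ∧
          (∫ ω, h3 (Sc n ω) i j k
            * (dW j ω * dW k ω - Om j k * (T / ↑N) - LA j k ω + LA k j ω) ∂μ) = 0 := by
        intro j k
        obtain ⟨h1, h2⟩ := hGV (fun ω => h3 (Sc n ω) i j k)
          (fun ω => dW j ω * dW k ω - Om j k * (T / ↑N) - LA j k ω + LA k j ω)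
          ⟨fun p => h3 p.2 i j k, ((hhl i j k).continuous.measurable).comp measurable_snd,
            fun ω => rfl⟩
          ⟨fun z => (∑ m ∈ Finset.range M, extφ z m j) * (∑ m ∈ Finset.range M, extφ z m k)
              - Om j k * (T / ↑N) - quadLevy M (extφ z) j k + quadLevy M (extφ z) k j,
            ((((hΨbm j).mul (hΨbm k)).sub measurable_const).sub (hΨqm j k)).add (hΨqm k j),
            fun ω => by
              show dW j ω * dW k ω - Om j k * (T / ↑N) - LA j k ω + LA k j ω = _
              rw [hVbe j ω, hVbe k ω, hLAe j k ω, hLAe k j ω]⟩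
          (integrable_lip_comp (hhl i j k) hScm ihc) (hVc j k).1
        exact ⟨h1, by rw [h2, (hVc j k).2, mul_zero]⟩
      have hpt : (fun ω => Sc (n+1) ω i) = fun ω => Sc n ω i
          + a (Sstar n ω) i * (T / ↑N)
          + (∑ j, b (Sc n ω) i j * dW j ω)
          + (∑ j, ∑ k, h3 (Sc n ω) i j k
              * (dW j ω * dW k ω - Om j k * (T / ↑N) - LA j k ω + LA k j ω)) := by
        funext ω
        rw [hc n ω]
        simp only [Pi.add_apply, DcM, Finset.sum_apply, hdW, hLA]
        ring
      have hBsum : Integrable (fun ω => ∑ j, b (Sc n ω) i j * dW j ω) μ :=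
        integrable_finset_sum _ fun j _ => (hB j).1
      have hHsum : Integrable (fun ω => ∑ j, ∑ k, h3 (Sc n ω) i j k
          * (dW j ω * dW k ω - Om j k * (T / ↑N) - LA j k ω + LA k j ω)) μ :=
        integrable_finset_sum _ fun j _ => integrable_finset_sum _ fun k _ => (hH j k).1
      have hI1 : Integrable (fun ω => Sc n ω i + a (Sstar n ω) i * (T / ↑N)) μ :=
        (ihc i).add hAint
      have hI2 : Integrable (fun ω => Sc n ω i + a (Sstar n ω) i * (T / ↑N)
          + (∑ j, b (Sc n ω) i j * dW j ω)) μ := hI1.add hBsum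
      refine ⟨?_, ?_⟩
      · rw [hpt]
        exact hI2.add hHsum
      · rw [hpt, integral_add hI2 hHsum,
          integral_add hI1 hBsum, integral_add (ihc i) hAint,
          integral_finset_sum _ (fun j _ => (hB j).1),
          integral_finset_sum _ (fun j _ => integrable_finset_sum _ fun k _ => (hH j k).1)]
        have hz1 : (∑ j, ∫ ω, b (Sc n ω) i j * dW j ω ∂μ) = 0 :=
          Finset.sum_eq_zero fun j _ => (hB j).2
        have hz2 : (∑ j, ∫ ω, ∑ k, h3 (Sc n ω) i j k
            * (dW j ω * dW k ω - Om j k * (T / ↑N) - LA j k ω + LA k j ω) ∂μ) = 0 := by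
          refine Finset.sum_eq_zero fun j _ => ?_
          rw [integral_finset_sum _ (fun k _ => (hH j k).1)]
          exact Finset.sum_eq_zero fun k _ => (hH j k).2
        rw [hz1, hz2, integral_mul_const]
        ring
    exact ⟨fun i => (hstar_dec i).1, fun i => (hc_dec i).1, fun i => by
      rw [(hstar_dec i).2, (hc_dec i).2, ihe i]⟩
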